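/- The EGF F(t,u,v) of forests of reduced rooted Greg hypertrees satisfies F = rev_t( ((v+1)·ln(1+ut)/u + v − v·exp(ln(1+ut)/u))·exp(−t) ). -/

import Mathlib

noncomputable section

/-- Composition `f(a)` of formal power series (the substitution of `a` into `f`,
valid when `a` has zero constant term). -/
def pcomp {R : Type*} [CommRing R] (f a : PowerSeries R) : PowerSeries R :=
  PowerSeries.mk fun n =>
    PowerSeries.coeff (R := R) n (∑ k ∈ Finset.range (n + 1),
      PowerSeries.C (R := R) (PowerSeries.coeff (R := R) k f) * a ^ k)

/-- Coefficient ring `ℚ[[u,v]]`. -/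
abbrev R2 : Type := MvPowerSeries (Fin 2) ℚ

/-- The hypertree weight variable `u`. -/
def uvar : R2 := MvPowerSeries.X 0

/-- The Greg weight (black vertices) variable `v`. -/
def vvar : R2 := MvPowerSeries.X 1

/-- `exp(t)` with coefficients in `ℚ[[u,v]]`. -/
def E2 : PowerSeries R2 := PowerSeries.exp R2

/-- `ln(1+ut)/u = Σ_{n≥1} (-1)^{n+1} u^{n-1} tⁿ/n`. -/
def Lgu2 : PowerSeries R2 :=
  PowerSeries.mk fun n => if n = 0 then 0 else ((-1 : ℚ) ^ (n + 1) / n) • uvar ^ (n - 1)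

section PcompLemmas
open PowerSeries Finset

variable {R : Type*} [CommRing R] (f g a b : PowerSeries R)

theorem coeff_pcomp (n : ℕ) : coeff n (pcomp f a) =
    coeff n (∑ k ∈ range (n + 1), C (coeff k f) * a ^ k) := by
  simp [pcomp, coeff_mk]

theorem coeff_pow_eq_zero (ha : constantCoeff a = 0) {n k : ℕ} (h : n < k) :
    coeff n (a ^ k) = 0 := by
  have : (X : R⟦X⟧) ^ k ∣ a ^ k := pow_dvd_pow_of_dvd (X_dvd_iff.mpr ha) k
  exact (X_pow_dvd_iff.mp this) n h

theorem aeval_trunc_eq (M : ℕ) : Polynomial.aeval a (trunc M f)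
    = ∑ k ∈ range M, C (coeff k f) * a ^ k := by
  rw [trunc_apply, map_sum, ← Finset.range_eq_Ico]
  exact Finset.sum_congr rfl fun k _ => by
    simp [Polynomial.aeval_monomial, ← PowerSeries.C_eq_algebraMap]

theorem coeff_pcomp_eq_aeval (ha : constantCoeff a = 0) {n N : ℕ} (h : n < N) :
    coeff n (pcomp f a) = coeff n (Polynomial.aeval a (trunc N f)) := by
  rw [coeff_pcomp, aeval_trunc_eq]
  rw [map_sum, map_sum]
  apply Finset.sum_subset (Finset.range_subset_range.mpr h)
  intro k hk hk'
  rw [Finset.mem_range, not_lt] at hk'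
  rw [coeff_C_mul, coeff_pow_eq_zero a ha (by omega), mul_zero]

theorem coeff_mul_pow_eq_zero (ha : constantCoeff a = 0) {n k : ℕ} (h : n < k)
    (y : R⟦X⟧) : coeff n (a ^ k * y) = 0 :=
  X_pow_dvd_iff.mp (dvd_mul_of_dvd_left
    (pow_dvd_pow_of_dvd (X_dvd_iff.mpr ha) k) y) n h

theorem aeval_coeff_congr {P Q : Polynomial R} (ha : constantCoeff a = 0) {n : ℕ}
    (h : ∀ k ≤ n, P.coeff k = Q.coeff k) :
    coeff n (Polynomial.aeval a P) = coeff n (Polynomial.aeval a Q) := by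
  rw [← sub_eq_zero, ← map_sub, ← map_sub]
  have : (Polynomial.X : Polynomial R) ^ (n + 1) ∣ P - Q := by
    rw [Polynomial.X_pow_dvd_iff]
    intro d hd
    rw [Polynomial.coeff_sub, h d (by omega), sub_self]
  obtain ⟨c, hc⟩ := this
  rw [hc, map_mul, map_pow, Polynomial.aeval_X]
  exact coeff_mul_pow_eq_zero a ha (Nat.lt_succ_self n) _

theorem pcomp_add : pcomp (f + g) a = pcomp f a + pcomp g a := by
  ext n
  rw [map_add, coeff_pcomp, coeff_pcomp, coeff_pcomp, ← map_add]
  congr 1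
  rw [← Finset.sum_add_distrib]
  exact sum_congr rfl fun k _ => by rw [map_add, map_add, add_mul]

theorem pcomp_C (r : R) : pcomp (C r) a = C r := by
  ext n
  rw [coeff_pcomp, Finset.sum_eq_single 0]
  · simp
  · intro k _ hk
    rw [coeff_C, if_neg hk, map_zero, zero_mul]
  · simp

theorem pcomp_one : pcomp 1 a = 1 := by
  rw [← map_one (C (R := R)), pcomp_C, map_one]

theorem pcomp_neg : pcomp (-f) a = -pcomp f a := by
  have := pcomp_add f (-f) a
  rw [add_neg_cancel] at this
  have h0 : pcomp 0 a = 0 := by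
    ext n; rw [coeff_pcomp]; simp
  rw [h0] at this
  exact (neg_eq_of_add_eq_zero_right this.symm).symm

theorem pcomp_X (ha : constantCoeff a = 0) : pcomp X a = a := by
  ext n
  rw [coeff_pcomp]
  cases n with
  | zero =>
    simp [coeff_zero_eq_constantCoeff, ha]
  | succ m =>
    rw [Finset.sum_eq_single 1]
    · simp
    · intro k _ hk
      rw [coeff_X, if_neg hk, map_zero, zero_mul]
    · intro h; exact absurd (Finset.mem_range.mpr (by omega)) h

theorem pcomp_mul (ha : constantCoeff a = 0) :
    pcomp (f * g) a = pcomp f a * pcomp g a := by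
  ext n
  rw [coeff_pcomp_eq_aeval (f * g) a ha (Nat.lt_succ_self n)]
  rw [aeval_coeff_congr a ha (P := trunc (n+1) (f*g))
    (Q := trunc (n+1) f * trunc (n+1) g) ?hcong]
  case hcong =>
    intro k hk
    rw [coeff_trunc, if_pos (by omega), Polynomial.coeff_mul, PowerSeries.coeff_mul]
    apply sum_congr rfl
    intro p hp
    rw [Finset.HasAntidiagonal.mem_antidiagonal] at hp
    rw [coeff_trunc, coeff_trunc, if_pos (by omega), if_pos (by omega)]
  rw [map_mul, PowerSeries.coeff_mul, PowerSeries.coeff_mul]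
  apply sum_congr rfl
  intro p hp
  rw [Finset.HasAntidiagonal.mem_antidiagonal] at hp
  rw [coeff_pcomp_eq_aeval f a ha (show p.1 < n + 1 by omega),
      coeff_pcomp_eq_aeval g a ha (show p.2 < n + 1 by omega)]

theorem pcomp_zero : pcomp 0 a = 0 := by
  ext n; rw [coeff_pcomp]; simp

theorem pcomp_sub : pcomp (f - g) a = pcomp f a - pcomp g a := by
  rw [sub_eq_add_neg, pcomp_add, pcomp_neg, sub_eq_add_neg]

theorem pcomp_pow (ha : constantCoeff a = 0) (k : ℕ) :
    pcomp (f ^ k) a = (pcomp f a) ^ k := by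
  induction k with
  | zero => simp [pcomp_one]
  | succ m ih => rw [pow_succ, pow_succ, pcomp_mul _ _ _ ha, ih]

theorem pcomp_X_right : pcomp f X = f := by
  ext n
  rw [coeff_pcomp, map_sum, Finset.sum_eq_single n]
  · rw [coeff_C_mul, coeff_X_pow, if_pos rfl, mul_one]
  · intro k hk hkn
    rw [coeff_C_mul, coeff_X_pow, if_neg (by omega), mul_zero]
  · intro h; exact absurd (Finset.mem_range.mpr (Nat.lt_succ_self n)) h

theorem coeff_pcomp_congr {n : ℕ} (h : ∀ k ≤ n, coeff k f = coeff k g) :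
    coeff n (pcomp f a) = coeff n (pcomp g a) := by
  rw [coeff_pcomp, coeff_pcomp]
  congr 1
  apply sum_congr rfl
  intro k hk
  rw [h k (by rw [Finset.mem_range] at hk; omega)]

theorem pcomp_aeval (P : Polynomial R) (ha : constantCoeff a = 0) :
    pcomp (Polynomial.aeval b P) a = Polynomial.aeval (pcomp b a) P := by
  induction P using Polynomial.induction_on' with
  | add p q hp hq => rw [map_add, pcomp_add, hp, hq, map_add]
  | monomial k c =>
    rw [Polynomial.aeval_monomial, Polynomial.aeval_monomial,
        pcomp_mul _ _ _ ha, pcomp_pow _ _ ha, ← PowerSeries.C_eq_algebraMap, pcomp_C]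

theorem constantCoeff_pcomp (ha : constantCoeff a = 0) :
    constantCoeff (pcomp f a) = constantCoeff f := by
  rw [← coeff_zero_eq_constantCoeff, coeff_pcomp]
  simp

theorem pcomp_assoc (ha : constantCoeff a = 0) (hb : constantCoeff b = 0) :
    pcomp (pcomp f b) a = pcomp f (pcomp b a) := by
  ext n
  rw [coeff_pcomp_congr (pcomp f b) (Polynomial.aeval b (trunc (n+1) f)) a
    (fun k hk => coeff_pcomp_eq_aeval f b hb (by omega))]
  rw [pcomp_aeval a b _ ha, aeval_trunc_eq, coeff_pcomp]

theorem coeff_one_pcomp (ha : constantCoeff a = 0) :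
    coeff 1 (pcomp f a) = coeff 1 f * coeff 1 a := by
  rw [coeff_pcomp]
  rw [show Finset.range 2 = {0, 1} by rfl]
  rw [Finset.sum_insert (by simp), Finset.sum_singleton]
  rw [map_add, coeff_C_mul, coeff_C_mul, pow_zero, pow_one]
  rw [coeff_one, if_neg one_ne_zero, mul_zero, zero_add]

theorem coeff_self_pow (ha : constantCoeff a = 0) (n : ℕ) :
    coeff n (a ^ n) = (coeff 1 a) ^ n := by
  obtain ⟨c, hc⟩ := X_dvd_iff.mpr ha
  have h1 : coeff 1 a = constantCoeff c := by
    rw [hc, ← coeff_zero_eq_constantCoeff]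
    exact coeff_succ_X_mul 0 c
  calc coeff n (a ^ n) = coeff n (X ^ n * c ^ n) := by rw [hc, mul_pow]
    _ = constantCoeff (c ^ n) := by
        rw [coeff_X_pow_mul', if_pos le_rfl, Nat.sub_self, coeff_zero_eq_constantCoeff]
    _ = (coeff 1 a) ^ n := by rw [map_pow, h1]

theorem pcomp_eq_zero_cancel (ha : constantCoeff a = 0)
    (ha1 : IsUnit (coeff 1 a)) (h : pcomp f a = 0) : f = 0 := by
  ext n
  induction n using Nat.strong_induction_on with
  | _ n ih =>
    have hn : coeff n (pcomp f a) = 0 := by rw [h, map_zero]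
    rw [coeff_pcomp, map_sum, Finset.sum_eq_single n] at hn
    · rw [coeff_C_mul, coeff_self_pow a ha] at hn
      rw [map_zero]
      exact (ha1.pow n).mul_left_eq_zero.mp hn
    · intro k hk hkn
      rw [coeff_C_mul, ih k (by rw [Finset.mem_range] at hk; omega), map_zero, zero_mul]
    · intro hcon; exact absurd (Finset.mem_range.mpr (Nat.lt_succ_self n)) hcon

theorem derivative_C_mul (r : R) : d⁄dX R (C r * f) = C r * d⁄dX R f := by
  rw [Derivation.leibniz, smul_eq_mul, smul_eq_mul, PowerSeries.derivative_C,
    mul_zero, add_zero]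

theorem derivative_aeval (P : Polynomial R) :
    d⁄dX R (Polynomial.aeval a P)
      = Polynomial.aeval a (Polynomial.derivative P) * d⁄dX R a := by
  induction P using Polynomial.induction_on' with
  | add p q hp hq => rw [map_add, map_add, Polynomial.derivative_add, map_add, hp, hq, add_mul]
  | monomial k c =>
    rw [Polynomial.aeval_monomial, Polynomial.derivative_monomial, Polynomial.aeval_monomial,
      ← PowerSeries.C_eq_algebraMap, ← PowerSeries.C_eq_algebraMap,
      derivative_C_mul, Derivation.leibniz_pow]
    rw [smul_eq_mul, nsmul_eq_mul, map_mul, map_natCast (C (R := R)) k]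
    ring

theorem pcomp_derivative (ha : constantCoeff a = 0) :
    d⁄dX R (pcomp f a) = pcomp (d⁄dX R f) a * d⁄dX R a := by
  ext n
  rw [coeff_derivative, coeff_pcomp_eq_aeval f a ha (Nat.lt_succ_self (n+1)),
    ← coeff_derivative, derivative_aeval, PowerSeries.coeff_mul, PowerSeries.coeff_mul]
  apply sum_congr rfl
  intro p hp
  rw [Finset.HasAntidiagonal.mem_antidiagonal] at hp
  congr 1
  rw [← PowerSeries.trunc_derivative,
    ← coeff_pcomp_eq_aeval (d⁄dX R f) a ha (show p.1 < n + 1 by omega)]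


end PcompLemmas

section R2Lemmas
open PowerSeries Finset

instance : NoZeroSMulDivisors ℕ R2 where
  eq_zero_or_eq_zero_of_smul_eq_zero {n x} h := by
    rcases eq_or_ne n 0 with h0 | h0
    · exact Or.inl h0
    · right
      have hq : (n : ℚ) • x = 0 := by rwa [Nat.cast_smul_eq_nsmul]
      exact (smul_eq_zero.mp hq).resolve_left (by exact_mod_cast h0)

instance : IsAddTorsionFree R2 := IsAddTorsionFree.of_module_rat R2

theorem natCast_ne_zero_R2 (n : ℕ) : ((n + 1 : ℕ) : R2) ≠ 0 := by
  intro h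
  have := congrArg (MvPowerSeries.constantCoeff (σ := Fin 2) (R := ℚ)) h
  rw [map_natCast, map_zero] at this
  exact_mod_cast this

theorem derivative_E2 : d⁄dX R2 E2 = E2 := by
  apply PowerSeries.ext
  intro n
  rw [PowerSeries.coeff_derivative]
  show coeff (n+1) (PowerSeries.exp R2) * _ = coeff n (PowerSeries.exp R2)
  rw [PowerSeries.coeff_exp, PowerSeries.coeff_exp]
  rw [show ((n : R2) + 1) = algebraMap ℚ R2 ((n : ℚ) + 1) by push_cast; ring]
  rw [← map_mul]
  congr 1
  rw [Nat.factorial_succ]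
  have h1 : ((n+1).factorial : ℚ) ≠ 0 := Nat.cast_ne_zero.mpr (Nat.factorial_ne_zero _)
  have h2 : (n.factorial : ℚ) ≠ 0 := Nat.cast_ne_zero.mpr (Nat.factorial_ne_zero _)
  field_simp
  push_cast; ring

theorem constantCoeff_E2 : constantCoeff E2 = 1 := PowerSeries.constantCoeff_exp

theorem isUnit_pcomp_E2 (a : PowerSeries R2) (ha : constantCoeff a = 0) :
    IsUnit (pcomp E2 a) := by
  rw [PowerSeries.isUnit_iff_constantCoeff, constantCoeff_pcomp _ _ ha, constantCoeff_E2]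
  exact isUnit_one

theorem pcomp_E2_deriv (a : PowerSeries R2) (ha : constantCoeff a = 0) :
    d⁄dX R2 (pcomp E2 a) = pcomp E2 a * d⁄dX R2 a := by
  rw [pcomp_derivative _ _ ha, derivative_E2]

theorem exp_injective {a b : PowerSeries R2} (ha : constantCoeff a = 0)
    (hb : constantCoeff b = 0) (h : pcomp E2 a = pcomp E2 b) : a = b := by
  apply PowerSeries.derivative.ext ?_ (ha.trans hb.symm)
  have h1 := pcomp_E2_deriv a ha
  have h2 := pcomp_E2_deriv b hb
  rw [h] at h1
  have : pcomp E2 b * d⁄dX R2 a = pcomp E2 b * d⁄dX R2 b := h1.symm.trans h2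
  exact (isUnit_pcomp_E2 b hb).mul_left_cancel this

theorem exp_mul_exp_neg (a : PowerSeries R2) (ha : constantCoeff a = 0) :
    pcomp E2 a * pcomp E2 (-a) = 1 := by
  have hna : constantCoeff (-a) = 0 := by rw [map_neg, ha, neg_zero]
  apply PowerSeries.derivative.ext
  · rw [Derivation.leibniz, smul_eq_mul, smul_eq_mul,
      pcomp_E2_deriv a ha, pcomp_E2_deriv (-a) hna, map_neg,
      Derivation.map_one_eq_zero]
    ring
  · rw [map_mul, constantCoeff_pcomp _ _ ha, constantCoeff_pcomp _ _ hna,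
      constantCoeff_E2, map_one, mul_one]

theorem constantCoeff_Lgu2 : constantCoeff Lgu2 = 0 := by
  rw [← coeff_zero_eq_constantCoeff]
  simp [Lgu2, coeff_mk]

theorem derivative_Lgu2 :
    d⁄dX R2 Lgu2 = PowerSeries.mk fun m => ((-1 : ℚ) ^ m) • uvar ^ m := by
  apply PowerSeries.ext
  intro n
  rw [PowerSeries.coeff_derivative]
  simp only [Lgu2, coeff_mk, Nat.succ_ne_zero, if_false, Nat.add_sub_cancel]
  rw [smul_mul_assoc, show ((n : R2) + 1) = ((n + 1 : ℕ) : R2) by push_cast; ring,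
    mul_comm, ← nsmul_eq_mul, ← Nat.cast_smul_eq_nsmul ℚ, smul_smul]
  congr 1
  have h : ((n : ℚ) + 1) ≠ 0 := by positivity
  push_cast
  rw [pow_succ]
  field_simp
  ring

theorem Lgu2_ode : (1 + C uvar * X) * d⁄dX R2 Lgu2 = 1 := by
  rw [derivative_Lgu2]
  apply PowerSeries.ext
  intro n
  rw [add_mul, one_mul, map_add, mul_assoc, coeff_C_mul]
  cases n with
  | zero =>
    simp [coeff_mk]
  | succ m =>
    rw [coeff_succ_X_mul, coeff_mk, coeff_mk, coeff_one, if_neg (Nat.succ_ne_zero m)]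
    rw [pow_succ, pow_succ, mul_smul_comm]
    rw [show uvar * uvar ^ m = uvar ^ m * uvar from mul_comm _ _]
    rw [show ((-1:ℚ) ^ m * -1) • (uvar ^ m * uvar) = -(((-1:ℚ)^m) • (uvar ^ m * uvar)) by
      rw [mul_neg_one, neg_smul]]
    rw [neg_add_cancel]

theorem ode_unique (f g : PowerSeries R2)
    (hf : (1 + C uvar * X) * d⁄dX R2 f = C uvar * f)
    (hg : (1 + C uvar * X) * d⁄dX R2 g = C uvar * g)
    (h0 : constantCoeff f = constantCoeff g) : f = g := by
  have key : (1 + C uvar * X) * d⁄dX R2 (f - g) = C uvar * (f - g) := by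
    rw [map_sub, mul_sub, hf, hg, mul_sub]
  suffices h : f - g = 0 by rw [← sub_eq_zero]; exact h
  apply PowerSeries.ext
  intro n
  induction n using Nat.strong_induction_on with
  | _ n ih =>
    cases n with
    | zero =>
      rw [coeff_zero_eq_constantCoeff, map_sub, h0, sub_self, map_zero]
    | succ m =>
      have hc := congrArg (coeff m) key
      rw [add_mul, one_mul, map_add, mul_assoc, coeff_C_mul, coeff_C_mul] at hc
      have hm : coeff m (f - g) = 0 := by
        rcases Nat.lt_or_ge m (m+1) with _ | h
        · exact (ih m (Nat.lt_succ_self m)).trans (map_zero _)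
        · omega
      have hXd : coeff m (X * d⁄dX R2 (f - g)) = 0 := by
        cases m with
        | zero =>
          rw [coeff_zero_eq_constantCoeff, map_mul, PowerSeries.constantCoeff_X, zero_mul]
        | succ p =>
          rw [coeff_succ_X_mul, PowerSeries.coeff_derivative]
          rw [(ih (p+1) (by omega)).trans (map_zero _), zero_mul]
      rw [hXd, mul_zero, add_zero, hm, mul_zero, PowerSeries.coeff_derivative] at hc
      rw [map_zero]
      rcases mul_eq_zero.mp hc with h | h
      · exact h
      · exfalso
        exact natCast_ne_zero_R2 m (by push_cast at h ⊢; exact_mod_cast h)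

theorem key1 : pcomp E2 (C uvar * Lgu2) = 1 + C uvar * X := by
  have h0 : constantCoeff (C uvar * Lgu2) = 0 := by
    rw [map_mul, PowerSeries.constantCoeff_C, constantCoeff_Lgu2, mul_zero]
  apply ode_unique
  · rw [pcomp_E2_deriv _ h0, derivative_C_mul]
    calc (1 + C uvar * X) * (pcomp E2 (C uvar * Lgu2) * (C uvar * d⁄dX R2 Lgu2))
        = (C uvar * pcomp E2 (C uvar * Lgu2))
            * ((1 + C uvar * X) * d⁄dX R2 Lgu2) := by ring
      _ = _ := by rw [Lgu2_ode, mul_one]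
  · rw [map_add, Derivation.map_one_eq_zero, derivative_C_mul, PowerSeries.derivative_X,
      mul_one, zero_add]
    ring
  · rw [constantCoeff_pcomp _ _ h0, constantCoeff_E2, map_add, map_one, map_mul,
      PowerSeries.constantCoeff_C, PowerSeries.constantCoeff_X, mul_zero, add_zero]

theorem C_uvar_ne_zero : C uvar ≠ 0 := by
  intro h
  have h1 := congrArg (constantCoeff (R := R2)) h
  rw [PowerSeries.constantCoeff_C, map_zero] at h1
  have h2 := congrArg (MvPowerSeries.coeff (R := ℚ) (Finsupp.single (0 : Fin 2) 1)) h1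
  rw [uvar, MvPowerSeries.coeff_X, map_zero] at h2
  simp at h2


end R2Lemmas

section MainTheorem
open PowerSeries Finset

/-- The EGF `F(t,u,v)` of forests of reduced rooted Greg hypertrees, determined by the
species equations `FRG = (1/u)E_{≥1}(u·RG)` and `RG = X·E(FRG) + v·E_{≥2}(RG)`
(i.e. `exp(u·RG) = 1 + u·FRG` and `RG = t·exp(FRG) + v(exp(RG) − RG − 1)`), satisfies
`F = rev_t( ((v+1)·ln(1+ut)/u + v − v·exp(ln(1+ut)/u))·exp(−t) )`. -/
theorem forests_reduced_greg_hypertrees_egf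
    (FRG RG : PowerSeries R2)
    (hFRG0 : PowerSeries.constantCoeff (R := R2) FRG = 0)
    (hRG0 : PowerSeries.constantCoeff (R := R2) RG = 0)
    (hFRG : pcomp E2 (PowerSeries.C (R := R2) uvar * RG) = 1 + PowerSeries.C (R := R2) uvar * FRG)
    (hRG : RG = PowerSeries.X * pcomp E2 FRG
        + PowerSeries.C (R := R2) vvar * (pcomp E2 RG - RG - 1)) :
    pcomp (((1 + PowerSeries.C (R := R2) vvar) * Lgu2
        + PowerSeries.C (R := R2) vvar * (1 - pcomp E2 Lgu2)) * pcomp E2 (-PowerSeries.X))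
      FRG = PowerSeries.X ∧
    pcomp FRG (((1 + PowerSeries.C (R := R2) vvar) * Lgu2
        + PowerSeries.C (R := R2) vvar * (1 - pcomp E2 Lgu2)) * pcomp E2 (-PowerSeries.X))
      = PowerSeries.X := by
  have hCuL0 : constantCoeff (C uvar * Lgu2) = 0 := by
    rw [map_mul, PowerSeries.constantCoeff_C, constantCoeff_Lgu2, mul_zero]
  have hRG' : pcomp Lgu2 FRG = RG := by
    have h1 : pcomp (pcomp E2 (C uvar * Lgu2)) FRG
        = pcomp E2 (C uvar * pcomp Lgu2 FRG) := by
      rw [pcomp_assoc _ _ _ hFRG0 hCuL0, pcomp_mul _ _ _ hFRG0, pcomp_C]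
    have h2 : pcomp (pcomp E2 (C uvar * Lgu2)) FRG = pcomp E2 (C uvar * RG) := by
      rw [key1, pcomp_add, pcomp_one, pcomp_mul _ _ _ hFRG0, pcomp_C, pcomp_X _ hFRG0,
        ← hFRG]
    have hx : constantCoeff (C uvar * pcomp Lgu2 FRG) = 0 := by
      rw [map_mul, PowerSeries.constantCoeff_C, constantCoeff_pcomp _ _ hFRG0,
        constantCoeff_Lgu2, mul_zero]
    have hy : constantCoeff (C uvar * RG) = 0 := by
      rw [map_mul, PowerSeries.constantCoeff_C, hRG0, mul_zero]
    exact mul_left_cancel₀ C_uvar_ne_zero (exp_injective hx hy (h1.symm.trans h2))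
  set G := ((1 + C vvar) * Lgu2 + C vvar * (1 - pcomp E2 Lgu2)) * pcomp E2 (-X)
    with hGdef
  have hnX0 : constantCoeff (-X : PowerSeries R2) = 0 := by
    rw [map_neg, PowerSeries.constantCoeff_X, neg_zero]
  have hexpL0 : constantCoeff (pcomp E2 Lgu2) = 1 := by
    rw [constantCoeff_pcomp _ _ constantCoeff_Lgu2, constantCoeff_E2]
  have hG0 : constantCoeff G = 0 := by
    rw [hGdef, map_mul, map_add, map_mul, map_mul, map_sub, map_one, hexpL0,
      constantCoeff_Lgu2, mul_zero, sub_self, mul_zero, add_zero, zero_mul]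
  have part1 : pcomp G FRG = X := by
    rw [hGdef, pcomp_mul _ _ _ hFRG0, pcomp_add, pcomp_mul _ _ _ hFRG0,
      pcomp_mul _ _ _ hFRG0, pcomp_add, pcomp_one, pcomp_C, pcomp_sub, pcomp_one,
      hRG', pcomp_assoc E2 FRG Lgu2 hFRG0 constantCoeff_Lgu2, hRG',
      pcomp_assoc E2 FRG (-X) hFRG0 hnX0, pcomp_neg, pcomp_X _ hFRG0]
    have hkey : (1 + C vvar) * RG + C vvar * (1 - pcomp E2 RG)
        = X * pcomp E2 FRG := by linear_combination hRG
    rw [hkey, mul_assoc, exp_mul_exp_neg FRG hFRG0, mul_one]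
  refine ⟨part1, ?_⟩
  have hFRG1 : IsUnit (coeff 1 FRG) := by
    have hco := congrArg (coeff 1) part1
    rw [coeff_one_pcomp _ _ hFRG0, PowerSeries.coeff_one_X] at hco
    exact IsUnit.of_mul_eq_one _ (by rw [mul_comm]; exact hco)
  have hcomp : pcomp (pcomp FRG G - X) FRG = 0 := by
    rw [pcomp_sub, pcomp_assoc _ _ _ hFRG0 hG0, part1, pcomp_X_right,
      pcomp_X _ hFRG0, sub_self]
  exact sub_eq_zero.mp (pcomp_eq_zero_cancel _ _ hFRG0 hFRG1 hcomp)

end MainTheorem
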